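/- Let (Ω, F, P) be a probability space, let p ≥ q + 2 with q ≥ 1, and let M be a real symmetric positive semidefinite p×p matrix with exactly q nonzero eigenvalues. For each n let M_n : Ω → (real symmetric p×p matrices) be measurable, and assume ‖M_n − M‖_F = O_p(n^{−1/2}), i.e. for every ε > 0 there exists C > 0 such that P(‖M_n − M‖_F > C·n^{−1/2}) ≤ ε for all n. Let λ̂_j(n) = λ_j(M_n) be the j-th largest eigenvalue of M_n, let c₁(n), c₂(n) > 0 with c₁(n) → 0, c₂(n) → 0 and n·c₁(n)·c₂(n) → ∞, and fix τ ∈ (0, 1). Define ŝ_j(n) = λ̂_j(n)/(1 + λ̂_j(n)), ŝ*_j(n) = (ŝ_j(n)² + c₁(n))/(ŝ_{j+1}(n)² + c₁(n)) − 1, r_j(n) = (ŝ*_{j+1}(n) + c₂(n))/(ŝ*_j(n) + c₂(n)), and S_n = {j ∈ {1, ..., p − 2} : r_j(n) ≤ τ}. Then P(S_n is nonempty and max S_n = q) → 1 as n → ∞. -/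

import Mathlib

open Filter MeasureTheory
open scoped Classical ENNReal

/-- The `i`-th largest eigenvalue (1-based, counted with multiplicity) of a real
symmetric `k × k` matrix; junk value `0` if `A` is not symmetric or `i` is out of range. -/
noncomputable def eigDesc {k : ℕ} (A : Matrix (Fin k) (Fin k) ℝ) (i : ℕ) : ℝ :=
  if h : A.IsHermitian ∧ i - 1 < k then
    h.1.eigenvalues (Tuple.sort h.1.eigenvalues (Fin.rev ⟨i - 1, h.2⟩))
  else 0

/-- The Frobenius norm of a real matrix. -/
noncomputable def frobNorm {m n : ℕ} (C : Matrix (Fin m) (Fin n) ℝ) : ℝ :=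
  Real.sqrt (∑ i, ∑ j, (C i j) ^ 2)

/-- `ŝ_j = λ̂_j / (1 + λ̂_j)`. -/
noncomputable def sHat (lam : ℕ → ℝ) (j : ℕ) : ℝ := lam j / (1 + lam j)

/-- First-round ridge ratio `ŝ*_j = (ŝ_j² + c₁)/(ŝ_{j+1}² + c₁) − 1`. -/
noncomputable def sStar (lam : ℕ → ℝ) (c1 : ℝ) (j : ℕ) : ℝ :=
  ((sHat lam j) ^ 2 + c1) / ((sHat lam (j + 1)) ^ 2 + c1) - 1

/-- Second-round ridge ratio `r_j = (ŝ*_{j+1} + c₂)/(ŝ*_j + c₂)`. -/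
noncomputable def rRatio (lam : ℕ → ℝ) (c1 c2 : ℝ) (j : ℕ) : ℝ :=
  (sStar lam c1 (j + 1) + c2) / (sStar lam c1 j + c2)

namespace TDRR
open Matrix

variable {p : ℕ} {A B : Matrix (Fin p) (Fin p) ℝ}

lemma frobNorm_nonneg {m n : ℕ} (C : Matrix (Fin m) (Fin n) ℝ) : 0 ≤ frobNorm C :=
  Real.sqrt_nonneg _

lemma frobNorm_sub_comm {m n : ℕ} (A B : Matrix (Fin m) (Fin n) ℝ) :
    frobNorm (A - B) = frobNorm (B - A) := by
  unfold frobNorm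
  congr 1
  refine Finset.sum_congr rfl fun i _ => Finset.sum_congr rfl fun j _ => ?_
  have h : (A - B) i j = -((B - A) i j) := by simp [Matrix.sub_apply]
  rw [h, neg_pow]; simp

lemma quad_le_frob (C : Matrix (Fin p) (Fin p) ℝ) (y : Fin p → ℝ)
    (hy : ∑ i, y i ^ 2 = 1) : y ⬝ᵥ (C *ᵥ y) ≤ frobNorm C := by
  have h1 : (y ⬝ᵥ (C *ᵥ y)) ^ 2 ≤ (∑ i, y i ^ 2) * (∑ i, (C *ᵥ y) i ^ 2) := by
    simpa [dotProduct] using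
      Finset.sum_mul_sq_le_sq_mul_sq Finset.univ y (C *ᵥ y)
  have h2 : ∀ i, (C *ᵥ y) i ^ 2 ≤ (∑ j, C i j ^ 2) * (∑ j, y j ^ 2) := by
    intro i
    simpa [Matrix.mulVec, dotProduct] using
      Finset.sum_mul_sq_le_sq_mul_sq Finset.univ (C i) y
  have h3 : (y ⬝ᵥ (C *ᵥ y)) ^ 2 ≤ ∑ i, ∑ j, C i j ^ 2 := by
    calc (y ⬝ᵥ (C *ᵥ y)) ^ 2 ≤ (∑ i, y i ^ 2) * (∑ i, (C *ᵥ y) i ^ 2) := h1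
    _ = ∑ i, (C *ᵥ y) i ^ 2 := by rw [hy, one_mul]
    _ ≤ ∑ i, (∑ j, C i j ^ 2) * (∑ j, y j ^ 2) := Finset.sum_le_sum fun i _ => h2 i
    _ = ∑ i, ∑ j, C i j ^ 2 := by simp [hy]
  calc y ⬝ᵥ (C *ᵥ y) ≤ |y ⬝ᵥ (C *ᵥ y)| := le_abs_self _
  _ = Real.sqrt ((y ⬝ᵥ (C *ᵥ y)) ^ 2) := (Real.sqrt_sq_eq_abs _).symm
  _ ≤ frobNorm C := Real.sqrt_le_sqrt h3

/-- coefficients of `v` in the eigenbasis -/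
noncomputable def coeffs (hA : A.IsHermitian) (v : Fin p → ℝ) : Fin p → ℝ :=
  star (hA.eigenvectorUnitary : Matrix (Fin p) (Fin p) ℝ) *ᵥ v

lemma quad_eq (hA : A.IsHermitian) (v : Fin p → ℝ) :
    v ⬝ᵥ (A *ᵥ v) = ∑ j, hA.eigenvalues j * (coeffs hA v j) ^ 2 := by
  set U := (hA.eigenvectorUnitary : Matrix (Fin p) (Fin p) ℝ) with hU
  have hspec := hA.spectral_theorem
  have hdiag : (RCLike.ofReal ∘ hA.eigenvalues : Fin p → ℝ) = hA.eigenvalues := by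
    ext i; simp
  have hc : v ᵥ* U = coeffs hA v := by
    rw [coeffs, Matrix.star_eq_conjTranspose, Matrix.conjTranspose_eq_transpose_of_trivial,
      Matrix.mulVec_transpose]
  conv_lhs => rw [hspec]
  rw [Unitary.conjStarAlgAut_apply, ← Matrix.mulVec_mulVec, Matrix.dotProduct_mulVec, ← Matrix.vecMul_vecMul, hc, hdiag]
  simp [dotProduct, Matrix.vecMul_diagonal, coeffs]
  exact Finset.sum_congr rfl fun j _ => by ring

lemma parseval (hA : A.IsHermitian) (v : Fin p → ℝ) :
    ∑ j, (coeffs hA v j) ^ 2 = v ⬝ᵥ v := by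
  set U := (hA.eigenvectorUnitary : Matrix (Fin p) (Fin p) ℝ) with hU
  have h1 : ∑ j, (coeffs hA v j) ^ 2 = coeffs hA v ⬝ᵥ (star U *ᵥ v) := by
    simp [dotProduct, coeffs, sq, hU]
  rw [h1, Matrix.dotProduct_mulVec]
  have h2 : coeffs hA v ᵥ* star U = U *ᵥ coeffs hA v := by
    rw [Matrix.star_eq_conjTranspose, Matrix.conjTranspose_eq_transpose_of_trivial,
      Matrix.vecMul_transpose]
  rw [h2, coeffs, Matrix.mulVec_mulVec,
    (Matrix.mem_unitaryGroup_iff).mp hA.eigenvectorUnitary.2, Matrix.one_mulVec]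

lemma exists_witness (hA : A.IsHermitian) (hB : B.IsHermitian) (k : Fin p) :
    ∃ y : Fin p → ℝ, (∑ i, y i ^ 2 = 1) ∧
      (∀ j : Fin p, j < k → coeffs hB y (Tuple.sort hB.eigenvalues j) = 0) ∧
      (∀ j : Fin p, k < j → coeffs hA y (Tuple.sort hA.eigenvalues j) = 0) := by
  classical
  set σA := Tuple.sort hA.eigenvalues
  set σB := Tuple.sort hB.eigenvalues
  set φ : (Fin p → ℝ) →ₗ[ℝ] ({j : Fin p // j < k} → ℝ) × ({j : Fin p // k < j} → ℝ) :=
    LinearMap.prod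
      (LinearMap.pi fun j => LinearMap.proj (σB j.1) ∘ₗ
        Matrix.mulVecLin (star (hB.eigenvectorUnitary : Matrix (Fin p) (Fin p) ℝ)))
      (LinearMap.pi fun j => LinearMap.proj (σA j.1) ∘ₗ
        Matrix.mulVecLin (star (hA.eigenvectorUnitary : Matrix (Fin p) (Fin p) ℝ))) with hφ
  have hcard1 : Fintype.card {j : Fin p // j < k} = (k : ℕ) := by
    rw [Fintype.card_of_subtype (Finset.Iio k) (fun x => Finset.mem_Iio)]
    exact Fin.card_Iio k
  have hcard2 : Fintype.card {j : Fin p // k < j} = p - 1 - (k : ℕ) := by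
    rw [Fintype.card_of_subtype (Finset.Ioi k) (fun x => Finset.mem_Ioi)]
    exact Fin.card_Ioi k
  have hker : ∃ x : Fin p → ℝ, x ≠ 0 ∧ φ x = 0 := by
    by_contra hcon
    push_neg at hcon
    have hinj : Function.Injective φ := by
      rw [← LinearMap.ker_eq_bot, Submodule.eq_bot_iff]
      intro x hx
      by_contra hxne
      exact (hcon x hxne) hx
    have hle := LinearMap.finrank_le_finrank_of_injective hinj
    rw [Module.finrank_prod, Module.finrank_pi, Module.finrank_pi, Module.finrank_pi,
      hcard1, hcard2, Fintype.card_fin] at hle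
    have hk := k.isLt
    omega
  obtain ⟨x, hx0, hxφ⟩ := hker
  have hsum : 0 < ∑ i, x i ^ 2 := by
    obtain ⟨i, hi⟩ := Function.ne_iff.mp hx0
    exact Finset.sum_pos' (fun j _ => sq_nonneg _)
      ⟨i, Finset.mem_univ i, (sq_nonneg _).lt_of_ne (Ne.symm (pow_ne_zero 2 hi))⟩
  set t : ℝ := Real.sqrt (∑ i, x i ^ 2) with ht
  have ht0 : 0 < t := Real.sqrt_pos.mpr hsum
  refine ⟨t⁻¹ • x, ?_, ?_, ?_⟩
  · have : ∑ i, (t⁻¹ • x) i ^ 2 = t⁻¹ ^ 2 * ∑ i, x i ^ 2 := by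
      rw [Finset.mul_sum]
      exact Finset.sum_congr rfl fun i _ => by simp [Pi.smul_apply, mul_pow]
    rw [this, ht, inv_pow, Real.sq_sqrt hsum.le, inv_mul_cancel₀ hsum.ne']
  · intro j hj
    have h1 : coeffs hB (t⁻¹ • x) = t⁻¹ • coeffs hB x := by
      unfold coeffs; rw [Matrix.mulVec_smul]
    have h2 : coeffs hB x (σB j) = 0 := by
      have := congrFun (congrArg Prod.fst hxφ) ⟨j, hj⟩
      simpa [hφ, coeffs] using this
    rw [h1, Pi.smul_apply, h2, smul_zero]
  · intro j hj
    have h1 : coeffs hA (t⁻¹ • x) = t⁻¹ • coeffs hA x := by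
      unfold coeffs; rw [Matrix.mulVec_smul]
    have h2 : coeffs hA x (σA j) = 0 := by
      have := congrFun (congrArg Prod.snd hxφ) ⟨j, hj⟩
      simpa [hφ, coeffs] using this
    rw [h1, Pi.smul_apply, h2, smul_zero]

theorem weyl (hA : A.IsHermitian) (hB : B.IsHermitian) (k : Fin p) :
    hB.eigenvalues (Tuple.sort hB.eigenvalues k) ≤
      hA.eigenvalues (Tuple.sort hA.eigenvalues k) + frobNorm (B - A) := by
  obtain ⟨y, hy1, hyB, hyA⟩ := exists_witness hA hB k
  set σA := Tuple.sort hA.eigenvalues with hσA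
  set σB := Tuple.sort hB.eigenvalues with hσB
  have hyy : y ⬝ᵥ y = 1 := by
    rw [← hy1]; exact Finset.sum_congr rfl fun i _ => (sq (y i)).symm
  have hparB : ∑ j, coeffs hB y (σB j) ^ 2 = 1 := by
    rw [Equiv.sum_comp σB (fun j => coeffs hB y j ^ 2), parseval hB y, hyy]
  have hparA : ∑ j, coeffs hA y (σA j) ^ 2 = 1 := by
    rw [Equiv.sum_comp σA (fun j => coeffs hA y j ^ 2), parseval hA y, hyy]
  have hBlow : hB.eigenvalues (σB k) ≤ y ⬝ᵥ (B *ᵥ y) := by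
    rw [quad_eq hB y, ← Equiv.sum_comp σB (fun j => hB.eigenvalues j * coeffs hB y j ^ 2)]
    calc hB.eigenvalues (σB k)
        = hB.eigenvalues (σB k) * ∑ j, coeffs hB y (σB j) ^ 2 := by rw [hparB, mul_one]
      _ = ∑ j, hB.eigenvalues (σB k) * coeffs hB y (σB j) ^ 2 := Finset.mul_sum _ _ _
      _ ≤ ∑ j, hB.eigenvalues (σB j) * coeffs hB y (σB j) ^ 2 := by
          refine Finset.sum_le_sum fun j _ => ?_
          rcases lt_or_ge j k with h | h
          · rw [hyB j h]; simp
          · exact mul_le_mul_of_nonneg_right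
              (Tuple.monotone_sort hB.eigenvalues h) (sq_nonneg _)
  have hAup : y ⬝ᵥ (A *ᵥ y) ≤ hA.eigenvalues (σA k) := by
    rw [quad_eq hA y, ← Equiv.sum_comp σA (fun j => hA.eigenvalues j * coeffs hA y j ^ 2)]
    calc ∑ j, hA.eigenvalues (σA j) * coeffs hA y (σA j) ^ 2
        ≤ ∑ j, hA.eigenvalues (σA k) * coeffs hA y (σA j) ^ 2 := by
          refine Finset.sum_le_sum fun j _ => ?_
          rcases le_or_gt j k with h | h
          · exact mul_le_mul_of_nonneg_right
              (Tuple.monotone_sort hA.eigenvalues h) (sq_nonneg _)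
          · rw [hyA j h]; simp
      _ = hA.eigenvalues (σA k) := by rw [← Finset.mul_sum, hparA, mul_one]
  have hdiff : y ⬝ᵥ (B *ᵥ y) - y ⬝ᵥ (A *ᵥ y) ≤ frobNorm (B - A) := by
    have h := quad_le_frob (B - A) y hy1
    have heq : y ⬝ᵥ ((B - A) *ᵥ y) = y ⬝ᵥ (B *ᵥ y) - y ⬝ᵥ (A *ᵥ y) := by
      rw [Matrix.sub_mulVec, dotProduct_sub]
    linarith
  linarith

lemma eigDesc_eq (hA : A.IsHermitian) {i : ℕ} (h : i - 1 < p) :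
    eigDesc A i = hA.eigenvalues (Tuple.sort hA.eigenvalues (Fin.rev ⟨i - 1, h⟩)) := by
  rw [eigDesc, dif_pos ⟨hA, h⟩]

lemma eigDesc_weyl (hA : A.IsHermitian) (hB : B.IsHermitian) {i : ℕ}
    (h1 : 1 ≤ i) (h2 : i ≤ p) :
    eigDesc B i ≤ eigDesc A i + frobNorm (B - A) := by
  have h : i - 1 < p := by omega
  rw [eigDesc_eq hA h, eigDesc_eq hB h]
  exact weyl hA hB _

lemma abs_eigDesc_sub (hA : A.IsHermitian) (hB : B.IsHermitian) {i : ℕ}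
    (h1 : 1 ≤ i) (h2 : i ≤ p) :
    |eigDesc B i - eigDesc A i| ≤ frobNorm (B - A) := by
  have hba := eigDesc_weyl hA hB h1 h2
  have hab := eigDesc_weyl hB hA h1 h2
  rw [frobNorm_sub_comm] at hab
  rw [abs_le]
  constructor <;> linarith

lemma eigDesc_antitone (hA : A.IsHermitian) {i j : ℕ} (h1 : 1 ≤ i) (hij : i ≤ j)
    (hj : j ≤ p) : eigDesc A j ≤ eigDesc A i := by
  have hi' : i - 1 < p := by omega
  have hj' : j - 1 < p := by omega
  rw [eigDesc_eq hA hi', eigDesc_eq hA hj']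
  apply Tuple.monotone_sort hA.eigenvalues
  rw [Fin.rev_le_rev]
  exact Fin.mk_le_mk.mpr (by omega)

set_option maxHeartbeats 2000000 in
lemma det_core (p q : ℕ) (hq : 1 ≤ q) (hpq : q + 2 ≤ p) (lam : ℕ → ℝ)
    (lq δ c1 c2 τ : ℝ) (hlq : 0 < lq) (hδ : 0 ≤ δ) (hc1 : 0 < c1) (hc2 : 0 < c2)
    (hτ0 : 0 < τ) (hτ1 : τ < 1)
    (hmono : ∀ i j : ℕ, 1 ≤ i → i ≤ j → j ≤ p → lam j ≤ lam i)
    (hlow : lq - δ ≤ lam q)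
    (hsmall : ∀ i : ℕ, q < i → i ≤ p → |lam i| ≤ δ)
    (cond0 : δ ≤ 1/2) (cond05 : δ ≤ lq/2)
    (condA : (1+τ) * (4*δ^2) < (1-τ) * (c1*c2))
    (condB1 : 8*δ^2 + c1 ≤ ((lq/2)/(1+lq/2))^2)
    (condB2 : 4*δ^2/c1 + c2 ≤ τ) :
    ({j : ℕ | 1 ≤ j ∧ j ≤ p - 2 ∧ rRatio lam c1 c2 j ≤ τ}).Nonempty ∧
      sSup {j : ℕ | 1 ≤ j ∧ j ≤ p - 2 ∧ rRatio lam c1 c2 j ≤ τ} = q := by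
  set s0 : ℝ := (lq/2)/(1+lq/2) with hs0def
  have hs0 : 0 < s0 := by positivity
  have hlamq : lq/2 ≤ lam q := by linarith
  have hlamqpos : 0 < lam q := by linarith
  -- all lam i in range are ≥ -1/2
  have claim_neg : ∀ i : ℕ, 1 ≤ i → i ≤ p → -(1/2 : ℝ) ≤ lam i := by
    intro i h1 h2
    rcases le_or_gt i q with h | h
    · have := hmono i q h1 h (by omega)
      linarith
    · have := abs_le.mp (hsmall i h h2)
      linarith
  have hden : ∀ i : ℕ, 1 ≤ i → i ≤ p → (0:ℝ) < 1 + lam i := by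
    intro i h1 h2; have := claim_neg i h1 h2; linarith
  -- sHat at q is at least s0
  have claim_sq : s0 ≤ sHat lam q := by
    have hdq : (0:ℝ) < 1 + lam q := hden q hq (by omega)
    have hda : (0:ℝ) < 1 + lq/2 := by linarith
    rw [hs0def, sHat, div_le_div_iff₀ hda hdq]
    nlinarith
  have claim_sq0 : 0 ≤ sHat lam q := le_trans hs0.le claim_sq
  -- sHat beyond q is small
  have claim_small : ∀ i : ℕ, q < i → i ≤ p → (sHat lam i)^2 ≤ 4*δ^2 := by
    intro i h1 h2
    have habs := abs_le.mp (hsmall i h1 h2)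
    have hu : (1:ℝ)/2 ≤ 1 + lam i := by linarith
    have hupos : (0:ℝ) < 1 + lam i := by linarith
    rw [sHat, div_pow, div_le_iff₀ (by positivity)]
    nlinarith [sq_le_sq' habs.1 habs.2,
      mul_nonneg (sq_nonneg δ) (mul_nonneg (by linarith : (0:ℝ) ≤ 2*(1+lam i)-1)
        (by linarith : (0:ℝ) ≤ 2*(1+lam i)+1))]
  -- sStar upper/lower bound beyond q
  have claim_up : ∀ j : ℕ, q < j → j + 1 ≤ p → sStar lam c1 j ≤ 4*δ^2/c1 := by
    intro j h1 h2
    have ha : (sHat lam j)^2 ≤ 4*δ^2 := claim_small j h1 (by omega)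
    have hb : (0:ℝ) ≤ (sHat lam (j+1))^2 := sq_nonneg _
    have hbden : (0:ℝ) < (sHat lam (j+1))^2 + c1 := by linarith
    rw [sStar, sub_le_iff_le_add]
    rw [div_le_iff₀ hbden]
    have : 4*δ^2/c1 * c1 = 4*δ^2 := div_mul_cancel₀ _ hc1.ne'
    nlinarith [div_nonneg (by positivity : (0:ℝ) ≤ 4*δ^2) hc1.le]
  have claim_lo : ∀ j : ℕ, q < j → j + 1 ≤ p → -(4*δ^2/c1) ≤ sStar lam c1 j := by
    intro j h1 h2
    have ha : (0:ℝ) ≤ (sHat lam j)^2 := sq_nonneg _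
    have hb : (sHat lam (j+1))^2 ≤ 4*δ^2 := claim_small (j+1) (by omega) (by omega)
    have hbden : (0:ℝ) < (sHat lam (j+1))^2 + c1 := by positivity
    have hkey : 4*δ^2/c1 * c1 = 4*δ^2 := div_mul_cancel₀ _ hc1.ne'
    have h5 : 1 - 4*δ^2/c1 ≤ ((sHat lam j)^2 + c1) / ((sHat lam (j+1))^2 + c1) := by
      rw [le_div_iff₀ hbden]
      nlinarith [mul_nonneg (div_nonneg (by positivity : (0:ℝ) ≤ 4*δ^2) hc1.le)
        (sq_nonneg (sHat lam (j+1)))]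
    rw [sStar]
    linarith
  -- sStar at q is at least 1
  have claim_q : 1 ≤ sStar lam c1 q := by
    have ha : s0^2 ≤ (sHat lam q)^2 := pow_le_pow_left₀ hs0.le claim_sq 2
    have hb : (sHat lam (q+1))^2 ≤ 4*δ^2 := claim_small (q+1) (by omega) (by omega)
    have hbden : (0:ℝ) < (sHat lam (q+1))^2 + c1 := by positivity
    have h5 : (1+1) * ((sHat lam (q+1))^2 + c1) ≤ (sHat lam q)^2 + c1 := by linarith
    rw [sStar, le_sub_iff_add_le, le_div_iff₀ hbden]
    linarith
  -- q is in the set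
  have hqS : q ∈ {j : ℕ | 1 ≤ j ∧ j ≤ p - 2 ∧ rRatio lam c1 c2 j ≤ τ} := by
    refine ⟨hq, by omega, ?_⟩
    have hnum : sStar lam c1 (q+1) + c2 ≤ τ := by
      have := claim_up (q+1) (by omega) (by omega)
      linarith
    have hden1 : (1:ℝ) + c2 ≤ sStar lam c1 q + c2 := by linarith
    have hdenpos : (0:ℝ) < sStar lam c1 q + c2 := by linarith
    rw [rRatio, div_le_iff₀ hdenpos]
    nlinarith
  -- all j > q in range are not in the set
  have hgt : ∀ j : ℕ, q < j → j ≤ p - 2 → τ < rRatio lam c1 c2 j := by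
    intro j h1 h2
    set e : ℝ := 4*δ^2/c1 with hedef
    have he : 0 ≤ e := by positivity
    have hup_j : sStar lam c1 j ≤ e := claim_up j h1 (by omega)
    have hlo_j : -e ≤ sStar lam c1 j := claim_lo j h1 (by omega)
    have hlo_j1 : -e ≤ sStar lam c1 (j+1) := claim_lo (j+1) (by omega) (by omega)
    have hec2 : (1+τ)*e < (1-τ)*c2 := by
      have h3 : (1+τ)*e*c1 = (1+τ)*(4*δ^2) := by
        rw [mul_assoc, hedef, div_mul_cancel₀ _ hc1.ne']
      have h4 : (1+τ)*e*c1 < ((1-τ)*c2)*c1 := by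
        rw [h3]; calc (1+τ)*(4*δ^2) < (1-τ)*(c1*c2) := condA
        _ = ((1-τ)*c2)*c1 := by ring
      exact lt_of_mul_lt_mul_right h4 hc1.le
    have hec : e < c2 := by nlinarith
    have hdenpos : (0:ℝ) < sStar lam c1 j + c2 := by linarith
    rw [rRatio, lt_div_iff₀ hdenpos]
    have : τ * (sStar lam c1 j + c2) ≤ τ * (e + c2) :=
      mul_le_mul_of_nonneg_left (by linarith) hτ0.le
    nlinarith
  refine ⟨⟨q, hqS⟩, ?_⟩
  have hbound : ∀ j ∈ {j : ℕ | 1 ≤ j ∧ j ≤ p - 2 ∧ rRatio lam c1 c2 j ≤ τ}, j ≤ q := by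
    intro j hj
    obtain ⟨hj1, hj2, hj3⟩ := hj
    by_contra hcon
    push_neg at hcon
    exact absurd hj3 (not_le.mpr (hgt j hcon hj2))
  exact le_antisymm (csSup_le ⟨q, hqS⟩ hbound) (le_csSup ⟨q, hbound⟩ hqS)


set_option maxHeartbeats 1000000 in
lemma good_of_close {p q : ℕ} (hq : 1 ≤ q) (hpq : q + 2 ≤ p)
    {M A : Matrix (Fin p) (Fin p) ℝ} (hA : M.IsHermitian) (hB : A.IsHermitian)
    (heigpos : 0 < eigDesc M q) (heigzero : ∀ j, q < j → j ≤ p → eigDesc M j = 0)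
    (δ c1 c2 τ : ℝ) (hδ : 0 ≤ δ) (hc1 : 0 < c1) (hc2 : 0 < c2)
    (hτ0 : 0 < τ) (hτ1 : τ < 1)
    (cond0 : δ ≤ 1/2) (cond05 : δ ≤ eigDesc M q / 2)
    (condA : (1+τ) * (4*δ^2) < (1-τ) * (c1*c2))
    (condB1 : 8*δ^2 + c1 ≤ ((eigDesc M q/2)/(1+eigDesc M q/2))^2)
    (condB2 : 4*δ^2/c1 + c2 ≤ τ)
    (hclose : frobNorm (A - M) ≤ δ) :
    ({j | 1 ≤ j ∧ j ≤ p - 2 ∧ rRatio (fun i => eigDesc A i) c1 c2 j ≤ τ}.Nonempty ∧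
      sSup {j | 1 ≤ j ∧ j ≤ p - 2 ∧ rRatio (fun i => eigDesc A i) c1 c2 j ≤ τ} = q) := by
  have habs : ∀ i : ℕ, 1 ≤ i → i ≤ p → |eigDesc A i - eigDesc M i| ≤ δ := fun i h1 h2 =>
    le_trans (abs_eigDesc_sub hA hB h1 h2) hclose
  have hmono : ∀ i j : ℕ, 1 ≤ i → i ≤ j → j ≤ p → eigDesc A j ≤ eigDesc A i :=
    fun i j h1 h2 h3 => eigDesc_antitone hB h1 h2 h3
  have hlow : eigDesc M q - δ ≤ eigDesc A q := by
    have := (abs_le.mp (habs q hq (by omega))).1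
    linarith
  have hsmall : ∀ i : ℕ, q < i → i ≤ p → |eigDesc A i| ≤ δ := by
    intro i h1 h2
    have := habs i (by omega) h2
    rwa [heigzero i h1 h2, sub_zero] at this
  exact det_core p q hq hpq (fun i => eigDesc A i) (eigDesc M q) δ c1 c2 τ
    heigpos hδ hc1 hc2 hτ0 hτ1 hmono hlow hsmall cond0 cond05 condA condB1 condB2

end TDRR

set_option maxHeartbeats 1000000 in
/-- Consistency of the TDRR estimate: if random symmetric matrices `M n` converge to a
positive semidefinite matrix `M` with exactly `q` nonzero eigenvalues at rate
`O_p(n^{−1/2})` in Frobenius norm, ridges satisfy `c₁(n) → 0`, `c₂(n) → 0`,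
`n·c₁(n)·c₂(n) → ∞`, and `τ ∈ (0,1)`, then with probability tending to one the set
`S_n = {j ∈ {1, ..., p − 2} : r_j(n) ≤ τ}` is nonempty with maximum `q`. -/
theorem tdrr_consistent (Ω : Type*) [MeasurableSpace Ω]
    (P : Measure Ω) [IsProbabilityMeasure P]
    (p q : ℕ) (hq : 1 ≤ q) (hpq : q + 2 ≤ p)
    (M : Matrix (Fin p) (Fin p) ℝ) (hM : M.PosSemidef)
    (heigpos : 0 < eigDesc M q) (heigzero : ∀ j, q < j → j ≤ p → eigDesc M j = 0)
    (Mn : ℕ → Ω → Matrix (Fin p) (Fin p) ℝ)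
    (hmeas : ∀ n i j, Measurable (fun ω => Mn n ω i j))
    (hherm : ∀ n ω, (Mn n ω).IsHermitian)
    (hOp : ∀ ε : ℝ≥0∞, 0 < ε → ∃ C : ℝ, 0 < C ∧ ∀ n : ℕ, 1 ≤ n →
      P {ω | C / Real.sqrt n < frobNorm (Mn n ω - M)} ≤ ε)
    (c1 c2 : ℕ → ℝ) (hc1pos : ∀ n, 0 < c1 n) (hc2pos : ∀ n, 0 < c2 n)
    (hc1 : Tendsto c1 atTop (nhds 0)) (hc2 : Tendsto c2 atTop (nhds 0))
    (hncc : Tendsto (fun n : ℕ => (n : ℝ) * c1 n * c2 n) atTop atTop)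
    (τ : ℝ) (hτ0 : 0 < τ) (hτ1 : τ < 1) :
    Tendsto (fun n => P {ω |
        {j | 1 ≤ j ∧ j ≤ p - 2 ∧
          rRatio (fun i => eigDesc (Mn n ω) i) (c1 n) (c2 n) j ≤ τ}.Nonempty ∧
        sSup {j | 1 ≤ j ∧ j ≤ p - 2 ∧
          rRatio (fun i => eigDesc (Mn n ω) i) (c1 n) (c2 n) j ≤ τ} = q})
      atTop (nhds 1) := by
  have hlqpos : 0 < eigDesc M q := heigpos
  set lq : ℝ := eigDesc M q with hlqdef
  set s0 : ℝ := (lq/2)/(1+lq/2) with hs0def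
  have hs0 : 0 < s0 := by positivity
  rw [ENNReal.tendsto_nhds (by norm_num : (1:ℝ≥0∞) ≠ ⊤)]
  intro ε hε
  obtain ⟨C, hC, hOpC⟩ := hOp ε hε
  have hD2 : Tendsto (fun n : ℕ => C^2 / n) atTop (nhds 0) :=
    tendsto_const_div_atTop_nhds_zero_nat _
  have hD8 : Tendsto (fun n : ℕ => 8*C^2 / n) atTop (nhds 0) :=
    tendsto_const_div_atTop_nhds_zero_nat _
  have F0 := Filter.eventually_ge_atTop 1 (α := ℕ)
  have F1 := hD2.eventually_lt_const
    (by positivity : (0:ℝ) < min ((1/2)^2) ((lq/2)^2))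
  have F2 := hncc.eventually_gt_atTop (4*C^2*(1+τ)/(1-τ))
  have F3 := hc1.eventually_lt_const (by positivity : (0:ℝ) < s0^2/2)
  have F4 := hD8.eventually_lt_const (by positivity : (0:ℝ) < s0^2/2)
  have F5 := hc2.eventually_lt_const (by positivity : (0:ℝ) < min (τ/2) 1)
  have F6 := hncc.eventually_gt_atTop (8*C^2/τ)
  filter_upwards [F0, F1, F2, F3, F4, F5, F6] with n f0 f1 f2 f3 f4 f5 f6
  have hnR : (0:ℝ) < n := by exact_mod_cast f0
  set δ : ℝ := C / Real.sqrt n with hδdef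
  have hδpos : 0 < δ := div_pos hC (Real.sqrt_pos.mpr hnR)
  have hsq : δ^2 = C^2 / n := by
    rw [hδdef, div_pow, Real.sq_sqrt (Nat.cast_nonneg n)]
  have hmin1 := lt_min_iff.mp f1
  have cond0 : δ ≤ 1/2 := by
    nlinarith [hmin1.1, hsq, sq_nonneg (δ - 1/2), sq_nonneg (δ + 1/2)]
  have cond05 : δ ≤ lq/2 := by
    nlinarith [hmin1.2, hsq, sq_nonneg (δ - lq/2), sq_nonneg (δ + lq/2)]
  have condA : (1+τ) * (4*δ^2) < (1-τ) * (c1 n * c2 n) := by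
    have h2 : 4*C^2*(1+τ) < (n : ℝ) * c1 n * c2 n * (1-τ) := by
      rw [div_lt_iff₀ (by linarith : (0:ℝ) < 1-τ)] at f2
      linarith
    have h3 : (1+τ) * (4*δ^2) = (4*C^2*(1+τ))/n := by
      rw [hsq]; ring
    rw [h3, div_lt_iff₀ hnR]
    nlinarith
  have condB1 : 8*δ^2 + c1 n ≤ s0^2 := by
    have h8 : 8*δ^2 = 8*C^2/n := by rw [hsq]; ring
    rw [h8]; linarith
  have condB2 : 4*δ^2/(c1 n) + c2 n ≤ τ := by
    have hc2lt : c2 n < 1 := (lt_min_iff.mp f5).2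
    have hnc1 : 8*C^2/τ < (n:ℝ) * c1 n := by
      have hle : (n:ℝ) * c1 n * c2 n ≤ (n:ℝ) * c1 n := by
        nlinarith [mul_pos hnR (hc1pos n), (hc2pos n).le]
      linarith
    have hnc1pos : (0:ℝ) < (n:ℝ) * c1 n :=
      lt_trans (by positivity) hnc1
    have he : 4*δ^2/(c1 n) = 4*C^2/((n:ℝ) * c1 n) := by
      rw [hsq, show 4*(C^2/(n:ℝ)) = 4*C^2/(n:ℝ) from by ring, div_div]
    have hhalf : 4*C^2/((n:ℝ) * c1 n) < τ/2 := by
      rw [div_lt_iff₀ hnc1pos]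
      have := (div_lt_iff₀ hτ0).mp hnc1
      nlinarith
    have := (lt_min_iff.mp f5).1
    rw [he]; linarith
  have hdet : ∀ ω : Ω, frobNorm (Mn n ω - M) ≤ δ →
      ({j | 1 ≤ j ∧ j ≤ p - 2 ∧
          rRatio (fun i => eigDesc (Mn n ω) i) (c1 n) (c2 n) j ≤ τ}.Nonempty ∧
        sSup {j | 1 ≤ j ∧ j ≤ p - 2 ∧
          rRatio (fun i => eigDesc (Mn n ω) i) (c1 n) (c2 n) j ≤ τ} = q) := by
    intro ω hω
    exact TDRR.good_of_close hq hpq hM.isHermitian (hherm n ω) heigpos heigzero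
      δ (c1 n) (c2 n) τ hδpos.le (hc1pos n) (hc2pos n) hτ0 hτ1
      cond0 cond05 condA (by rw [← hlqdef, ← hs0def]; exact condB1) condB2 hω
  set G : Set Ω := {ω |
      {j | 1 ≤ j ∧ j ≤ p - 2 ∧
        rRatio (fun i => eigDesc (Mn n ω) i) (c1 n) (c2 n) j ≤ τ}.Nonempty ∧
      sSup {j | 1 ≤ j ∧ j ≤ p - 2 ∧
        rRatio (fun i => eigDesc (Mn n ω) i) (c1 n) (c2 n) j ≤ τ} = q} with hG
  have hsub : Gᶜ ⊆ {ω | C / Real.sqrt n < frobNorm (Mn n ω - M)} := by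
    intro ω hω
    by_contra hno
    simp only [Set.mem_setOf_eq, not_lt] at hno
    exact hω (hdet ω hno)
  have hcompl : P Gᶜ ≤ ε := le_trans (measure_mono hsub) (hOpC n f0)
  have h1 : (1:ℝ≥0∞) ≤ P G + ε := by
    calc (1:ℝ≥0∞) = P Set.univ := measure_univ.symm
    _ = P (G ∪ Gᶜ) := by rw [Set.union_compl_self]
    _ ≤ P G + P Gᶜ := measure_union_le _ _
    _ ≤ P G + ε := add_le_add_right hcompl _
  exact ⟨tsub_le_iff_right.mpr h1, le_trans prob_le_one le_self_add⟩
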